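/- arXiv:1106.5044 — 6 statements merged into one kernel-verified Lean document; each statement's English description precedes it below -/
import Mathlib

section
/- Let X be a C¹ vector field on an open set Ω ⊆ ℝⁿ, ν : Ω → ℝ a C¹ nonvanishing function with div((1/ν)·X) = 0, and let C₁, …, C_{n−2}, H be conserved quantities of X. Suppose x(t) is an integral curve of X contained in the set where div(X) ≠ 0, and define the new time s by ds/dt = −div(X)(x(t)). Then the functions u₁ = 1/ν, u₂ = C₁/ν, …, u_{n−1} = C_{n−2}/ν, u_n = H/ν, evaluated along x and reparametrized by s, satisfy u′ᵢ = uᵢ for all i = 1, …, n. -/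
/-- The `i`-th partial derivative of `f : (Fin n → ℝ) → ℝ`. -/
noncomputable def pd {n : ℕ} (i : Fin n) (f : (Fin n → ℝ) → ℝ) (x : Fin n → ℝ) : ℝ :=
  fderiv ℝ f x (Pi.single i 1)

/-- Divergence of a vector field on `ℝⁿ` w.r.t. Lebesgue measure. -/
noncomputable def div' {n : ℕ} (X : (Fin n → ℝ) → (Fin n → ℝ)) (x : Fin n → ℝ) : ℝ :=
  ∑ i, pd i (fun y => X y i) x

lemma clm_apply_eq_sum {n : ℕ} (L : (Fin n → ℝ) →L[ℝ] ℝ) (v : Fin n → ℝ) :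
    L v = ∑ i, v i * L (Pi.single i 1) := by
  conv_lhs => rw [← Finset.univ_sum_single v, map_sum]
  refine Finset.sum_congr rfl fun i _ => ?_
  have h : (Pi.single i (v i) : Fin n → ℝ) = v i • (Pi.single i 1 : Fin n → ℝ) := by
    ext j; by_cases hj : j = i <;> simp [Pi.single_apply, hj]
  rw [h, map_smul, smul_eq_mul]

theorem main_linearization {m : ℕ} (Ω : Set (Fin (m + 2) → ℝ)) (hΩ : IsOpen Ω)
    (X : (Fin (m + 2) → ℝ) → (Fin (m + 2) → ℝ)) (hX : ContDiffOn ℝ 1 X Ω)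
    (ν : (Fin (m + 2) → ℝ) → ℝ) (hν : ContDiffOn ℝ 1 ν Ω) (hν0 : ∀ x ∈ Ω, ν x ≠ 0)
    (hdf : ∀ x ∈ Ω, div' (fun y => (ν y)⁻¹ • X y) x = 0)
    (F : Fin (m + 1) → (Fin (m + 2) → ℝ) → ℝ) (hF : ∀ k, ContDiffOn ℝ 1 (F k) Ω)
    (hcons : ∀ k, ∀ x ∈ Ω, (∑ i, pd i (F k) x * X x i) = 0)
    (x : ℝ → Fin (m + 2) → ℝ) (hmem : ∀ t, x t ∈ Ω)
    (hode : ∀ t, HasDerivAt x (X (x t)) t)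
    (hdiv : ∀ t, div' X (x t) ≠ 0)
    (τ : ℝ → ℝ) (hτ : ∀ s, HasDerivAt τ (-(div' X (x (τ s))))⁻¹ s)
    (u : Fin (m + 2) → (Fin (m + 2) → ℝ) → ℝ)
    (hu0 : u 0 = fun y => (ν y)⁻¹)
    (hui : ∀ k : Fin (m + 1), u k.succ = fun y => F k y / ν y) :
    ∀ (i : Fin (m + 2)) (s : ℝ),
      HasDerivAt (fun s => u i (x (τ s))) (u i (x (τ s))) s := by
  have key : ∀ (i : Fin (m + 2)) (t : ℝ),
      HasDerivAt (fun t => u i (x t)) (-(u i (x t)) * div' X (x t)) t := by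
    intro i t
    have hp : x t ∈ Ω := hmem t
    have hnp : Ω ∈ nhds (x t) := hΩ.mem_nhds hp
    have hνd : HasFDerivAt ν (fderiv ℝ ν (x t)) (x t) :=
      ((hν.differentiableOn one_ne_zero).differentiableAt hnp).hasFDerivAt
    have hXd : HasFDerivAt X (fderiv ℝ X (x t)) (x t) :=
      ((hX.differentiableOn one_ne_zero).differentiableAt hnp).hasFDerivAt
    have hνne : ν (x t) ≠ 0 := hν0 _ hp
    obtain ⟨G, hg⟩ : ∃ G, HasFDerivAt (fun y => (ν y)⁻¹) G (x t) :=
      ⟨_, (hasFDerivAt_inv hνne).comp (x t) hνd⟩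
    have hXi : ∀ j : Fin (m + 2), HasFDerivAt (fun y => X y j)
        ((ContinuousLinearMap.proj j).comp (fderiv ℝ X (x t))) (x t) := fun j =>
      ((ContinuousLinearMap.proj (R := ℝ) (φ := fun _ : Fin (m + 2) => ℝ) j)).hasFDerivAt.comp (x t) hXd
    have hdivX : div' X (x t) = ∑ j, (fderiv ℝ X (x t)) (Pi.single j 1) j := by
      unfold div' pd
      refine Finset.sum_congr rfl fun j _ => ?_
      rw [(hXi j).fderiv]; rfl
    have hGX : G (X (x t)) = -(ν (x t))⁻¹ * div' X (x t) := by
      have h0 := hdf (x t) hp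
      unfold div' pd at h0
      have hESum : ∀ j : Fin (m + 2),
          fderiv ℝ (fun y => ((ν y)⁻¹ • X y) j) (x t) (Pi.single j 1)
          = (ν (x t))⁻¹ * (fderiv ℝ X (x t) (Pi.single j 1) j)
            + X (x t) j * G (Pi.single j 1) := by
        intro j
        have hmul : HasFDerivAt (fun y => (ν y)⁻¹ * X y j)
            ((ν (x t))⁻¹ • ((ContinuousLinearMap.proj j).comp (fderiv ℝ X (x t)))
              + X (x t) j • G) (x t) := hg.mul (hXi j)
        have heq : (fun y => ((ν y)⁻¹ • X y) j) = fun y => (ν y)⁻¹ * X y j := by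
          funext y; simp
        rw [heq, hmul.fderiv]
        simp [ContinuousLinearMap.add_apply, ContinuousLinearMap.smul_apply,
          smul_eq_mul]
      rw [Finset.sum_congr rfl (fun j _ => hESum j), Finset.sum_add_distrib,
        ← Finset.mul_sum] at h0
      rw [clm_apply_eq_sum G (X (x t))]
      rw [hdivX]
      linarith
    refine Fin.cases ?_ ?_ i
    · rw [hu0]
      have h := hg.comp_hasDerivAt t (hode t)
      have hval : -(ν (x t))⁻¹ * div' X (x t) = G (X (x t)) := hGX.symm
      rw [hval]
      exact h
    · intro k
      rw [hui k]
      have hFd : HasFDerivAt (F k) (fderiv ℝ (F k) (x t)) (x t) :=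
        (((hF k).differentiableOn one_ne_zero).differentiableAt hnp).hasFDerivAt
      have hDFX : fderiv ℝ (F k) (x t) (X (x t)) = 0 := by
        rw [clm_apply_eq_sum]
        have h := hcons k (x t) hp
        unfold pd at h
        rw [← h]
        exact Finset.sum_congr rfl fun j _ => mul_comm _ _
      have hmul : HasFDerivAt (fun y => F k y * (ν y)⁻¹)
          (F k (x t) • G + (ν (x t))⁻¹ • fderiv ℝ (F k) (x t)) (x t) := hFd.mul hg
      have hcomp := hmul.comp_hasDerivAt t (hode t)
      have hval : (F k (x t) • G + (ν (x t))⁻¹ • fderiv ℝ (F k) (x t)) (X (x t))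
          = -(F k (x t) / ν (x t)) * div' X (x t) := by
        simp only [ContinuousLinearMap.add_apply, ContinuousLinearMap.smul_apply,
          smul_eq_mul, hGX, hDFX]
        field_simp
        ring
      rw [hval] at hcomp
      have hfun : ((fun y => F k y * (ν y)⁻¹) ∘ x) = fun t => F k (x t) / ν (x t) := by
        funext t; simp [Function.comp, div_eq_mul_inv]
      rw [hfun] at hcomp
      exact hcomp
  intro i s
  have h1 := key i (τ s)
  have h2 := h1.comp s (hτ s)
  have hd := hdiv (τ s)
  have hval : -(u i (x (τ s))) * div' X (x (τ s)) * (-(div' X (x (τ s))))⁻¹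
      = u i (x (τ s)) := by
    field_simp
  rw [hval] at h2
  exact h2
end

section
/- The function C(x₁,x₂,x₃) = x₂(x₁ + x₂ + x₃)/(x₁x₃) is a conserved quantity of the 3D Lotka–Volterra system ẋ₁ = x₁(x₂+x₃), ẋ₂ = x₂(−x₁+x₃), ẋ₃ = x₃(−x₁−x₂) on the open set where x₁x₃ ≠ 0; that is, ⟨∇C, X⟩ = 0 there, where X is the vector field of the system. -/
theorem lotka_volterra_C_conserved :
    ∀ x : Fin 3 → ℝ, x 0 * x 2 ≠ 0 →
      (∑ i, pd i (fun y : Fin 3 → ℝ => y 1 * (y 0 + y 1 + y 2) / (y 0 * y 2)) x *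
        (![x 0 * (x 1 + x 2), x 1 * (-(x 0) + x 2), x 2 * (-(x 0) - x 1)] i)) = 0 := by
  intro x hx
  have h0 : x 0 ≠ 0 := (mul_ne_zero_iff.mp hx).1
  have h2 : x 2 ≠ 0 := (mul_ne_zero_iff.mp hx).2
  have hp : ∀ i : Fin 3, HasFDerivAt (fun y : Fin 3 → ℝ => y i)
      (ContinuousLinearMap.proj i : (Fin 3 → ℝ) →L[ℝ] ℝ) x := fun i => hasFDerivAt_apply i x
  have hinv : HasFDerivAt (fun y : Fin 3 → ℝ => (y 0 * y 2)⁻¹) _ x :=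
    (hasFDerivAt_inv' hx).comp x ((hp 0).mul (hp 2))
  have hf : HasFDerivAt (fun y : Fin 3 → ℝ => y 1 * (y 0 + y 1 + y 2) * (y 0 * y 2)⁻¹) _ x :=
    ((hp 1).mul (((hp 0).add (hp 1)).add (hp 2))).mul hinv
  simp only [div_eq_mul_inv, pd, hf.fderiv, Fin.sum_univ_three]
  simp [ContinuousLinearMap.proj_apply, Pi.single_apply, ContinuousLinearMap.mulLeftRight_apply,
    mul_inv]
  field_simp
  ring
end

section
/- The vector field (1/ν)·X, where X is the Lotka–Volterra vector field X = (x₁(x₂+x₃), x₂(−x₁+x₃), x₃(−x₁−x₂)) and ν = −x₁²x₃²/(x₁+x₂+x₃), is divergence-free on the open set where x₁x₃ ≠ 0 and x₁+x₂+x₃ ≠ 0. -/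
lemma pd_eq {n : ℕ} {f : (Fin n → ℝ) → ℝ} {L : (Fin n → ℝ) →L[ℝ] ℝ} {x : Fin n → ℝ}
    (h : HasFDerivAt f L x) (i : Fin n) : pd i f x = L (Pi.single i 1) := by
  rw [pd, h.fderiv]

theorem lotka_volterra_rescaled_div_free (ν : (Fin 3 → ℝ) → ℝ)
    (hν : ∀ x, ν x = -(x 0 ^ 2 * x 2 ^ 2) / (x 0 + x 1 + x 2)) :
    ∀ x : Fin 3 → ℝ, x 0 * x 2 ≠ 0 → x 0 + x 1 + x 2 ≠ 0 →
      div' (fun y : Fin 3 → ℝ => (ν y)⁻¹ •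
        ![y 0 * (y 1 + y 2), y 1 * (-(y 0) + y 2), y 2 * (-(y 0) - y 1)]) x = 0 := by
  intro x hx hs
  have hx0 : x 0 ≠ 0 := fun h => hx (by rw [h]; ring)
  have hx2 : x 2 ≠ 0 := fun h => hx (by rw [h]; ring)
  have hne : -(x 0 * x 0 * (x 2 * x 2)) ≠ 0 := by
    simp only [neg_ne_zero]; positivity
  have h0 : HasFDerivAt (fun y : Fin 3 → ℝ => y 0) (ContinuousLinearMap.proj 0 : (Fin 3 → ℝ) →L[ℝ] ℝ) x :=
    hasFDerivAt_apply 0 x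
  have h1 : HasFDerivAt (fun y : Fin 3 → ℝ => y 1) (ContinuousLinearMap.proj 1 : (Fin 3 → ℝ) →L[ℝ] ℝ) x :=
    hasFDerivAt_apply 1 x
  have h2 : HasFDerivAt (fun y : Fin 3 → ℝ => y 2) (ContinuousLinearMap.proj 2 : (Fin 3 → ℝ) →L[ℝ] ℝ) x :=
    hasFDerivAt_apply 2 x
  have hp := ((h0.mul h0).mul (h2.mul h2)).neg
  have hinv := (hasFDerivAt_inv hne).comp x hp
  simp only [Function.comp_def] at hinv
  have hq := ((h0.add h1).add h2).mul hinv
  have hf0 := hq.mul (h0.mul (h1.add h2))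
  have hf1 := hq.mul (h1.mul (h0.neg.add h2))
  have hf2 := hq.mul (h2.mul (h0.neg.sub h1))
  have key : ∀ y : Fin 3 → ℝ, (ν y)⁻¹ = (y 0 + y 1 + y 2) * (-(y 0 * y 0 * (y 2 * y 2)))⁻¹ := by
    intro y; rw [hν, inv_div, div_eq_mul_inv]; ring_nf
  rw [div', Fin.sum_univ_three]
  have e0 : (fun y : Fin 3 → ℝ => ((ν y)⁻¹ •
      ![y 0 * (y 1 + y 2), y 1 * (-(y 0) + y 2), y 2 * (-(y 0) - y 1)]) 0)
      = fun y => ((y 0 + y 1 + y 2) * (-(y 0 * y 0 * (y 2 * y 2)))⁻¹) * (y 0 * (y 1 + y 2)) := by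
    funext y; simp [key]
  have e1 : (fun y : Fin 3 → ℝ => ((ν y)⁻¹ •
      ![y 0 * (y 1 + y 2), y 1 * (-(y 0) + y 2), y 2 * (-(y 0) - y 1)]) 1)
      = fun y => ((y 0 + y 1 + y 2) * (-(y 0 * y 0 * (y 2 * y 2)))⁻¹) * (y 1 * (-(y 0) + y 2)) := by
    funext y; simp [key]
  have e2 : (fun y : Fin 3 → ℝ => ((ν y)⁻¹ •
      ![y 0 * (y 1 + y 2), y 1 * (-(y 0) + y 2), y 2 * (-(y 0) - y 1)]) 2)
      = fun y => ((y 0 + y 1 + y 2) * (-(y 0 * y 0 * (y 2 * y 2)))⁻¹) * (y 2 * (-(y 0) - y 1)) := by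
    funext y; simp [key]
  rw [e0, e1, e2,
    pd_eq (f := fun y => ((y 0 + y 1 + y 2) * (-(y 0 * y 0 * (y 2 * y 2)))⁻¹) * (y 0 * (y 1 + y 2))) hf0 0,
    pd_eq (f := fun y => ((y 0 + y 1 + y 2) * (-(y 0 * y 0 * (y 2 * y 2)))⁻¹) * (y 1 * (-(y 0) + y 2))) hf1 1,
    pd_eq (f := fun y => ((y 0 + y 1 + y 2) * (-(y 0 * y 0 * (y 2 * y 2)))⁻¹) * (y 2 * (-(y 0) - y 1))) hf2 2]
  simp only [ContinuousLinearMap.add_apply, ContinuousLinearMap.smul_apply,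
    ContinuousLinearMap.comp_apply, ContinuousLinearMap.smulRight_apply,
    ContinuousLinearMap.one_apply, ContinuousLinearMap.proj_apply,
    ContinuousLinearMap.neg_apply, ContinuousLinearMap.sub_apply,
    Pi.single_eq_same, smul_eq_mul]
  have s01 : (Pi.single (0 : Fin 3) (1:ℝ) : Fin 3 → ℝ) 1 = 0 := Pi.single_eq_of_ne (by decide) _
  have s02 : (Pi.single (0 : Fin 3) (1:ℝ) : Fin 3 → ℝ) 2 = 0 := Pi.single_eq_of_ne (by decide) _
  have s10 : (Pi.single (1 : Fin 3) (1:ℝ) : Fin 3 → ℝ) 0 = 0 := Pi.single_eq_of_ne (by decide) _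
  have s12 : (Pi.single (1 : Fin 3) (1:ℝ) : Fin 3 → ℝ) 2 = 0 := Pi.single_eq_of_ne (by decide) _
  have s20 : (Pi.single (2 : Fin 3) (1:ℝ) : Fin 3 → ℝ) 0 = 0 := Pi.single_eq_of_ne (by decide) _
  have s21 : (Pi.single (2 : Fin 3) (1:ℝ) : Fin 3 → ℝ) 1 = 0 := Pi.single_eq_of_ne (by decide) _
  rw [s01, s02, s10, s12, s20, s21]
  simp only [Pi.mul_apply, Pi.add_apply, Pi.neg_apply, Pi.sub_apply, Pi.pow_apply,
    ContinuousLinearMap.toSpanSingleton_apply, smul_eq_mul]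
  field_simp
  ring
end

section
/- Let x(t) = (x₁(t),x₂(t),x₃(t)) be a solution of the 3D Lotka–Volterra system ẋ₁ = x₁(x₂+x₃), ẋ₂ = x₂(−x₁+x₃), ẋ₃ = x₃(−x₁−x₂) staying in the region where x₁ ≠ x₃, x₁x₃ ≠ 0, and x₁+x₂+x₃ ≠ 0. Then each of the functions u₁ = −(x₁+x₂+x₃)/(x₁²x₃²), u₂ = −x₂(x₁+x₂+x₃)²/(x₁³x₃³), u₃ = −(x₁+x₂+x₃)²/(x₁²x₃²), evaluated along x(t), satisfies duᵢ/dt = 2(x₁ − x₃)·uᵢ. -/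
theorem lotka_volterra_linearization (x₁ x₂ x₃ : ℝ → ℝ)
    (h1 : ∀ t, HasDerivAt x₁ (x₁ t * (x₂ t + x₃ t)) t)
    (h2 : ∀ t, HasDerivAt x₂ (x₂ t * (-(x₁ t) + x₃ t)) t)
    (h3 : ∀ t, HasDerivAt x₃ (x₃ t * (-(x₁ t) - x₂ t)) t)
    (hreg : ∀ t, x₁ t ≠ x₃ t ∧ x₁ t * x₃ t ≠ 0 ∧ x₁ t + x₂ t + x₃ t ≠ 0)
    (u₁ u₂ u₃ : ℝ → ℝ)
    (hu₁ : u₁ = fun t => -((x₁ t + x₂ t + x₃ t) / (x₁ t ^ 2 * x₃ t ^ 2)))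
    (hu₂ : u₂ = fun t => -(x₂ t * (x₁ t + x₂ t + x₃ t) ^ 2 / (x₁ t ^ 3 * x₃ t ^ 3)))
    (hu₃ : u₃ = fun t => -((x₁ t + x₂ t + x₃ t) ^ 2 / (x₁ t ^ 2 * x₃ t ^ 2))) :
    ∀ t, HasDerivAt u₁ (2 * (x₁ t - x₃ t) * u₁ t) t ∧
         HasDerivAt u₂ (2 * (x₁ t - x₃ t) * u₂ t) t ∧
         HasDerivAt u₃ (2 * (x₁ t - x₃ t) * u₃ t) t := by
  intro t
  obtain ⟨-, hx13, hs⟩ := hreg t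
  have hx1 : x₁ t ≠ 0 := fun h => hx13 (by rw [h]; ring)
  have hx3 : x₃ t ≠ 0 := fun h => hx13 (by rw [h]; ring)
  have hS : HasDerivAt (fun t => x₁ t + x₂ t + x₃ t)
      (x₁ t * (x₂ t + x₃ t) + x₂ t * (-(x₁ t) + x₃ t) + x₃ t * (-(x₁ t) - x₂ t)) t :=
    ((h1 t).add (h2 t)).add (h3 t)
  have hd2 : HasDerivAt (fun t => x₁ t ^ 2 * x₃ t ^ 2)
      ((2 * x₁ t ^ 1 * (x₁ t * (x₂ t + x₃ t))) * x₃ t ^ 2 +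
        x₁ t ^ 2 * (2 * x₃ t ^ 1 * (x₃ t * (-(x₁ t) - x₂ t)))) t :=
    ((h1 t).pow 2).mul ((h3 t).pow 2)
  have hd2ne : x₁ t ^ 2 * x₃ t ^ 2 ≠ 0 := by positivity
  have hd3 : HasDerivAt (fun t => x₁ t ^ 3 * x₃ t ^ 3)
      ((3 * x₁ t ^ 2 * (x₁ t * (x₂ t + x₃ t))) * x₃ t ^ 3 +
        x₁ t ^ 3 * (3 * x₃ t ^ 2 * (x₃ t * (-(x₁ t) - x₂ t)))) t :=
    ((h1 t).pow 3).mul ((h3 t).pow 3)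
  have hd3ne : x₁ t ^ 3 * x₃ t ^ 3 ≠ 0 := by
    exact mul_ne_zero (pow_ne_zero _ hx1) (pow_ne_zero _ hx3)
  refine ⟨?_, ?_, ?_⟩
  · rw [hu₁]
    have := ((hS.div hd2 hd2ne)).neg
    refine this.congr_deriv ?_
    beta_reduce
    field_simp
    ring
  · rw [hu₂]
    have := (((h2 t).mul (hS.pow 2)).div hd3 hd3ne).neg
    refine this.congr_deriv ?_
    simp only [Pi.pow_apply, Pi.mul_apply]
    field_simp
    ring
  · rw [hu₃]
    have := ((hS.pow 2).div hd2 hd2ne).neg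
    refine this.congr_deriv ?_
    simp only [Pi.pow_apply, Pi.mul_apply]
    field_simp
    ring
end

section
/- Let I₁, I₂, I₃ be nonzero reals with I₂ ≠ I₃, and let x(t′) be a solution of the rescaled Euler system dx₁/dt′ = (I₂−I₃)/(I₂I₃)·x₁x₂x₃, dx₂/dt′ = (I₃−I₁)/(I₁I₃)·x₁²x₃, dx₃/dt′ = (I₁−I₂)/(I₁I₂)·x₁²x₂, staying in the region x₁x₂x₃ ≠ 0. Then each of u₁ = −1/x₁, u₂ = −(x₁²+x₂²+x₃²)/(2x₁), u₃ = −x₁/(2I₁) − x₂²/(2x₁I₂) − x₃²/(2x₁I₃), evaluated along x(t′), satisfies duᵢ/dt′ = (I₃−I₂)/(I₂I₃)·x₂x₃·uᵢ. -/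
theorem rescaled_euler_linearization (I₁ I₂ I₃ : ℝ)
    (h1 : I₁ ≠ 0) (h2 : I₂ ≠ 0) (h3 : I₃ ≠ 0) (h23 : I₂ ≠ I₃)
    (x₁ x₂ x₃ : ℝ → ℝ)
    (hd1 : ∀ t, HasDerivAt x₁ ((I₂ - I₃) / (I₂ * I₃) * (x₁ t * x₂ t * x₃ t)) t)
    (hd2 : ∀ t, HasDerivAt x₂ ((I₃ - I₁) / (I₁ * I₃) * (x₁ t ^ 2 * x₃ t)) t)
    (hd3 : ∀ t, HasDerivAt x₃ ((I₁ - I₂) / (I₁ * I₂) * (x₁ t ^ 2 * x₂ t)) t)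
    (hreg : ∀ t, x₁ t * x₂ t * x₃ t ≠ 0)
    (u₁ u₂ u₃ : ℝ → ℝ)
    (hu₁ : u₁ = fun t => -(1 / x₁ t))
    (hu₂ : u₂ = fun t => -((x₁ t ^ 2 + x₂ t ^ 2 + x₃ t ^ 2) / (2 * x₁ t)))
    (hu₃ : u₃ = fun t => -(x₁ t / (2 * I₁)) - x₂ t ^ 2 / (2 * x₁ t * I₂)
                  - x₃ t ^ 2 / (2 * x₁ t * I₃)) :
    ∀ t, HasDerivAt u₁ ((I₃ - I₂) / (I₂ * I₃) * (x₂ t * x₃ t) * u₁ t) t ∧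
         HasDerivAt u₂ ((I₃ - I₂) / (I₂ * I₃) * (x₂ t * x₃ t) * u₂ t) t ∧
         HasDerivAt u₃ ((I₃ - I₂) / (I₂ * I₃) * (x₂ t * x₃ t) * u₃ t) t := by
  intro t
  have hx1 : x₁ t ≠ 0 := fun h => hreg t (by simp [h])
  have hx2 : x₂ t ≠ 0 := fun h => hreg t (by simp [h])
  have hx3 : x₃ t ≠ 0 := fun h => hreg t (by simp [h])
  subst hu₁ hu₂ hu₃
  refine ⟨?_, ?_, ?_⟩
  · have := (((hasDerivAt_const t (1:ℝ)).div (hd1 t) hx1)).neg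
    refine this.congr_deriv ?_
    field_simp
    ring
  · have hnum : HasDerivAt (fun t => x₁ t ^ 2 + x₂ t ^ 2 + x₃ t ^ 2)
        (2 * x₁ t ^ 1 * ((I₂ - I₃) / (I₂ * I₃) * (x₁ t * x₂ t * x₃ t))
          + 2 * x₂ t ^ 1 * ((I₃ - I₁) / (I₁ * I₃) * (x₁ t ^ 2 * x₃ t))
          + 2 * x₃ t ^ 1 * ((I₁ - I₂) / (I₁ * I₂) * (x₁ t ^ 2 * x₂ t))) t :=
      (((hd1 t).pow 2).add ((hd2 t).pow 2)).add ((hd3 t).pow 2)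
    have hden : HasDerivAt (fun t => 2 * x₁ t)
        (2 * ((I₂ - I₃) / (I₂ * I₃) * (x₁ t * x₂ t * x₃ t))) t :=
      (hd1 t).const_mul 2
    have := (hnum.div hden (by simpa using hx1)).neg
    refine this.congr_deriv ?_
    field_simp
    ring
  · have ha : HasDerivAt (fun t => -(x₁ t / (2 * I₁)))
        (-((I₂ - I₃) / (I₂ * I₃) * (x₁ t * x₂ t * x₃ t) / (2 * I₁))) t :=
      ((hd1 t).div_const _).neg
    have hb : HasDerivAt (fun t => x₂ t ^ 2 / (2 * x₁ t * I₂))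
        ((2 * x₂ t ^ 1 * ((I₃ - I₁) / (I₁ * I₃) * (x₁ t ^ 2 * x₃ t)) * (2 * x₁ t * I₂)
          - x₂ t ^ 2 * (2 * ((I₂ - I₃) / (I₂ * I₃) * (x₁ t * x₂ t * x₃ t)) * I₂))
          / (2 * x₁ t * I₂) ^ 2) t :=
      ((hd2 t).pow 2).div (((hd1 t).const_mul 2).mul_const I₂)
        (by simp [hx1, h2])
    have hc : HasDerivAt (fun t => x₃ t ^ 2 / (2 * x₁ t * I₃))
        ((2 * x₃ t ^ 1 * ((I₁ - I₂) / (I₁ * I₂) * (x₁ t ^ 2 * x₂ t)) * (2 * x₁ t * I₃)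
          - x₃ t ^ 2 * (2 * ((I₂ - I₃) / (I₂ * I₃) * (x₁ t * x₂ t * x₃ t)) * I₃))
          / (2 * x₁ t * I₃) ^ 2) t :=
      ((hd3 t).pow 2).div (((hd1 t).const_mul 2).mul_const I₃)
        (by simp [hx1, h3])
    have := (ha.sub hb).sub hc
    refine this.congr_deriv ?_
    field_simp
    ring
end

section
/- For C² functions C₁, C₂, H : ℝ⁴ → ℝ, the vector field X̃ on ℝ⁴ with components X̃ᵢ = ∂(C₁, C₂, xᵢ, H)/∂(x₁,x₂,x₃,x₄) (the 4×4 Jacobian determinant of the map (C₁, C₂, πᵢ, H), where πᵢ is the i-th coordinate projection) is divergence-free: ∑ᵢ₌₁⁴ ∂ᵢX̃ᵢ = 0. -/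
lemma contDiff_pd {n : ℕ} {f : (Fin n → ℝ) → ℝ} (hf : ContDiff ℝ 2 f) (k : Fin n) :
    ContDiff ℝ 1 (pd k f) :=
  (hf.fderiv_right (by norm_num)).clm_apply contDiff_const

lemma pd_symm {n : ℕ} {f : (Fin n → ℝ) → ℝ} (hf : ContDiff ℝ 2 f) (j k : Fin n)
    (x : Fin n → ℝ) : pd j (pd k f) x = pd k (pd j f) x := by
  have hd : ContDiff ℝ 1 (fderiv ℝ f) := hf.fderiv_right (by norm_num)
  have key : ∀ v w : Fin n → ℝ, fderiv ℝ (fun y => fderiv ℝ f y v) x w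
      = fderiv ℝ (fderiv ℝ f) x w v := by
    intro v w
    rw [fderiv_clm_apply (hd.differentiable one_ne_zero x) (differentiableAt_const v)]
    simp
  have hsym := (hf.contDiffAt (x := x)).isSymmSndFDerivAt (by norm_num)
  have e1 : pd k f = fun y => fderiv ℝ f y (Pi.single k 1) := rfl
  have e2 : pd j f = fun y => fderiv ℝ f y (Pi.single j 1) := rfl
  rw [pd, pd, e1, e2, key, key, hsym]

lemma pd_proj {n : ℕ} (c i : Fin n) (x : Fin n → ℝ) :
    pd c (fun y => y i) x = if c = i then 1 else 0 := by
  have : (fun y : Fin n → ℝ => y i) = (ContinuousLinearMap.proj i : (Fin n → ℝ) →L[ℝ] ℝ) := rfl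
  rw [pd, this, ContinuousLinearMap.fderiv]
  simp [Pi.single_apply, eq_comm]

lemma pd_mul {n : ℕ} {f g : (Fin n → ℝ) → ℝ} {x : Fin n → ℝ} (j : Fin n)
    (hf : DifferentiableAt ℝ f x) (hg : DifferentiableAt ℝ g x) :
    pd j (fun y => f y * g y) x = pd j f x * g x + f x * pd j g x := by
  simp [pd, fderiv_fun_mul hf hg]; ring

lemma pd_add {n : ℕ} {f g : (Fin n → ℝ) → ℝ} {x : Fin n → ℝ} (j : Fin n)
    (hf : DifferentiableAt ℝ f x) (hg : DifferentiableAt ℝ g x) :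
    pd j (fun y => f y + g y) x = pd j f x + pd j g x := by
  simp [pd, fderiv_fun_add hf hg]

lemma pd_sub {n : ℕ} {f g : (Fin n → ℝ) → ℝ} {x : Fin n → ℝ} (j : Fin n)
    (hf : DifferentiableAt ℝ f x) (hg : DifferentiableAt ℝ g x) :
    pd j (fun y => f y - g y) x = pd j f x - pd j g x := by
  simp [pd, fderiv_fun_sub hf hg]

lemma pd_mul3 {f g h : (Fin 4 → ℝ) → ℝ} {x : Fin 4 → ℝ} (i : Fin 4)
    (hf : DifferentiableAt ℝ f x) (hg : DifferentiableAt ℝ g x)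
    (hh : DifferentiableAt ℝ h x) :
    pd i (fun y => f y * g y * h y) x
      = pd i f x * g x * h x + f x * pd i g x * h x + f x * g x * pd i h x := by
  rw [pd_mul i (hf.fun_mul hg) hh, pd_mul i hf hg]; ring

lemma pd_expr (i p q r : Fin 4) {f g h : (Fin 4 → ℝ) → ℝ} {x : Fin 4 → ℝ}
    (hf : ∀ j, DifferentiableAt ℝ (pd j f) x) (hg : ∀ j, DifferentiableAt ℝ (pd j g) x)
    (hh : ∀ j, DifferentiableAt ℝ (pd j h) x) :
    pd i (fun y => pd p f y * pd q g y * pd r h y - pd p f y * pd r g y * pd q h y - pd q f y * pd p g y * pd r h y + pd q f y * pd r g y * pd p h y + pd r f y * pd p g y * pd q h y - pd r f y * pd q g y * pd p h y) x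
      = (pd i (pd p f) x * pd q g x * pd r h x + pd p f x * pd i (pd q g) x * pd r h x + pd p f x * pd q g x * pd i (pd r h) x) - (pd i (pd p f) x * pd r g x * pd q h x + pd p f x * pd i (pd r g) x * pd q h x + pd p f x * pd r g x * pd i (pd q h) x) - (pd i (pd q f) x * pd p g x * pd r h x + pd q f x * pd i (pd p g) x * pd r h x + pd q f x * pd p g x * pd i (pd r h) x) + (pd i (pd q f) x * pd r g x * pd p h x + pd q f x * pd i (pd r g) x * pd p h x + pd q f x * pd r g x * pd i (pd p h) x) + (pd i (pd r f) x * pd p g x * pd q h x + pd r f x * pd i (pd p g) x * pd q h x + pd r f x * pd p g x * pd i (pd q h) x) - (pd i (pd r f) x * pd q g x * pd p h x + pd r f x * pd i (pd q g) x * pd p h x + pd r f x * pd q g x * pd i (pd p h) x) := by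
  have t : ∀ a b c : Fin 4, DifferentiableAt ℝ (fun y => pd a f y * pd b g y * pd c h y) x :=
    fun a b c => ((hf a).mul (hg b)).mul (hh c)
  rw [pd_sub i (((((t p q r).fun_sub (t p r q)).fun_sub (t q p r)).fun_add (t q r p)).fun_add (t r p q)) (t r q p),
      pd_add i ((((t p q r).fun_sub (t p r q)).fun_sub (t q p r)).fun_add (t q r p)) (t r p q),
      pd_add i (((t p q r).fun_sub (t p r q)).fun_sub (t q p r)) (t q r p),
      pd_sub i ((t p q r).fun_sub (t p r q)) (t q p r),
      pd_sub i (t p q r) (t p r q),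
      pd_mul3 i (hf p) (hg q) (hh r), pd_mul3 i (hf p) (hg r) (hh q),
      pd_mul3 i (hf q) (hg p) (hh r), pd_mul3 i (hf q) (hg r) (hh p),
      pd_mul3 i (hf r) (hg p) (hh q), pd_mul3 i (hf r) (hg q) (hh p)]

theorem flaschka_ratiu_div_free_dim4
    (C₁ C₂ H : (Fin 4 → ℝ) → ℝ)
    (hC₁ : ContDiff ℝ 2 C₁) (hC₂ : ContDiff ℝ 2 C₂) (hH : ContDiff ℝ 2 H)
    (Xt : Fin 4 → (Fin 4 → ℝ) → ℝ)
    (hXt : ∀ i x, Xt i x =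
      (Matrix.of fun r c : Fin 4 =>
        pd c (![C₁, C₂, fun y => y i, H] r) x).det) :
    ∀ x, (∑ i, pd i (Xt i) x) = 0 := by
  intro x
  have da : ∀ j, DifferentiableAt ℝ (pd j C₁) x :=
    fun j => ((contDiff_pd hC₁ j).differentiable one_ne_zero).differentiableAt
  have db : ∀ j, DifferentiableAt ℝ (pd j C₂) x :=
    fun j => ((contDiff_pd hC₂ j).differentiable one_ne_zero).differentiableAt
  have dh : ∀ j, DifferentiableAt ℝ (pd j H) x :=
    fun j => ((contDiff_pd hH j).differentiable one_ne_zero).differentiableAt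
  have hX0 : Xt 0 = fun y => pd 1 C₁ y * pd 2 C₂ y * pd 3 H y - pd 1 C₁ y * pd 3 C₂ y * pd 2 H y - pd 2 C₁ y * pd 1 C₂ y * pd 3 H y + pd 2 C₁ y * pd 3 C₂ y * pd 1 H y + pd 3 C₁ y * pd 1 C₂ y * pd 2 H y - pd 3 C₁ y * pd 2 C₂ y * pd 1 H y := by
    funext y
    rw [hXt 0 y]
    simp [Matrix.det_succ_row_zero, Fin.sum_univ_succ, pd_proj, Fin.succAbove]
    ring
  have hX1 : Xt 1 = fun y => pd 2 C₁ y * pd 0 C₂ y * pd 3 H y - pd 2 C₁ y * pd 3 C₂ y * pd 0 H y - pd 0 C₁ y * pd 2 C₂ y * pd 3 H y + pd 0 C₁ y * pd 3 C₂ y * pd 2 H y + pd 3 C₁ y * pd 2 C₂ y * pd 0 H y - pd 3 C₁ y * pd 0 C₂ y * pd 2 H y := by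
    funext y
    rw [hXt 1 y]
    simp [Matrix.det_succ_row_zero, Fin.sum_univ_succ, pd_proj, Fin.succAbove, Fin.ext_iff,
      show (2:Fin 3).succ = 3 from rfl, show Fin.castSucc (2:Fin 3) = 2 from rfl,
      show ((1:Fin 4) < 3) = True from by decide, show ((3:Fin 4) : ℕ) = 3 from rfl]
    ring
  have hX2 : Xt 2 = fun y => pd 0 C₁ y * pd 1 C₂ y * pd 3 H y - pd 0 C₁ y * pd 3 C₂ y * pd 1 H y - pd 1 C₁ y * pd 0 C₂ y * pd 3 H y + pd 1 C₁ y * pd 3 C₂ y * pd 0 H y + pd 3 C₁ y * pd 0 C₂ y * pd 1 H y - pd 3 C₁ y * pd 1 C₂ y * pd 0 H y := by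
    funext y
    rw [hXt 2 y]
    simp [Matrix.det_succ_row_zero, Fin.sum_univ_succ, pd_proj, Fin.succAbove, Fin.ext_iff,
      show (2:Fin 3).succ = 3 from rfl, show Fin.castSucc (2:Fin 3) = 2 from rfl,
      show ((1:Fin 4) < 3) = True from by decide, show ((3:Fin 4) : ℕ) = 3 from rfl]
    ring
  have hX3 : Xt 3 = fun y => pd 1 C₁ y * pd 0 C₂ y * pd 2 H y - pd 1 C₁ y * pd 2 C₂ y * pd 0 H y - pd 0 C₁ y * pd 1 C₂ y * pd 2 H y + pd 0 C₁ y * pd 2 C₂ y * pd 1 H y + pd 2 C₁ y * pd 1 C₂ y * pd 0 H y - pd 2 C₁ y * pd 0 C₂ y * pd 1 H y := by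
    funext y
    rw [hXt 3 y]
    simp [Matrix.det_succ_row_zero, Fin.sum_univ_succ, pd_proj, Fin.succAbove, Fin.ext_iff,
      show (2:Fin 3).succ = 3 from rfl, show Fin.castSucc (2:Fin 3) = 2 from rfl,
      show ((1:Fin 4) < 3) = True from by decide, show ((3:Fin 4) : ℕ) = 3 from rfl]
    ring
  rw [Fin.sum_univ_four, hX0, hX1, hX2, hX3,
    pd_expr 0 1 2 3 da db dh, pd_expr 1 2 0 3 da db dh,
    pd_expr 2 0 1 3 da db dh, pd_expr 3 1 0 2 da db dh]
  simp only [pd_symm hC₁ 1 0, pd_symm hC₁ 2 0, pd_symm hC₁ 2 1, pd_symm hC₁ 3 0, pd_symm hC₁ 3 1, pd_symm hC₁ 3 2, pd_symm hC₂ 1 0, pd_symm hC₂ 2 0, pd_symm hC₂ 2 1, pd_symm hC₂ 3 0, pd_symm hC₂ 3 1, pd_symm hC₂ 3 2, pd_symm hH 1 0, pd_symm hH 2 0, pd_symm hH 2 1, pd_symm hH 3 0, pd_symm hH 3 1, pd_symm hH 3 2]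
  ring
end
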